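/- Let R be a Prüfer domain. Then an R-module is flat if and only if it is torsion-free. -/

import Mathlib

universe u v

/-- A submodule `A ≤ M` is pure if every finite system of `R`-linear equations with
parameters in `A` that is solvable in `M` is solvable in `A`. -/
def IsPureSubmodule (R : Type u) [Ring R] {M : Type v} [AddCommGroup M] [Module R M]
    (A : Submodule R M) : Prop :=
  ∀ (k n : ℕ) (c : Fin k → Fin n → R) (a : Fin k → M),
    (∀ i, a i ∈ A) →
    (∃ x : Fin n → M, ∀ i, (∑ j, c i j • x j) = a i) →
    ∃ x : Fin n → M, (∀ j, x j ∈ A) ∧ ∀ i, (∑ j, c i j • x j) = a i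

/-- A linear map is a pure embedding if it is injective and its range is a pure submodule. -/
def IsPureEmbedding (R : Type u) [Ring R] {M N : Type v} [AddCommGroup M] [Module R M]
    [AddCommGroup N] [Module R N] (f : M →ₗ[R] N) : Prop :=
  Function.Injective f ∧ IsPureSubmodule R (LinearMap.range f)

/-- A module is pure-injective if it is a direct summand of every module containing it
as a pure submodule, i.e. every pure embedding out of it admits a retraction. -/
def IsPureInjective (R : Type u) [Ring R] (M : Type v) [AddCommGroup M] [Module R M] : Prop :=
  ∀ (N : Type v) [AddCommGroup N] [Module R N] (f : M →ₗ[R] N),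
    IsPureEmbedding R f → ∃ g : N →ₗ[R] M, g ∘ₗ f = LinearMap.id

/-- A module is absolutely pure if it is pure in every module containing it. -/
def IsAbsolutelyPure (R : Type u) [Ring R] (M : Type v) [AddCommGroup M] [Module R M] : Prop :=
  ∀ (N : Type v) [AddCommGroup N] [Module R N] (f : M →ₗ[R] N),
    Function.Injective f → IsPureSubmodule R (LinearMap.range f)

open TensorProduct

theorem stmt17Aux.div_linear (R : Type u) [CommRing R] [IsDomain R] (I : Ideal R) (b : FractionRing R)
    (hb : ∀ a : I, ∃ r : R, algebraMap R (FractionRing R) r = b * algebraMap R (FractionRing R) a) :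
    ∃ g : I →ₗ[R] R, ∀ a : I, algebraMap R (FractionRing R) (g a) = b * algebraMap R (FractionRing R) a := by
  have hinj : Function.Injective (Algebra.linearMap R (FractionRing R)) :=
    IsFractionRing.injective R (FractionRing R)
  set f : I →ₗ[R] FractionRing R :=
    b • ((Algebra.linearMap R (FractionRing R)).comp I.subtype) with hf
  have hfa : ∀ a : I, f a = b * algebraMap R (FractionRing R) a := by
    intro a; simp [hf, smul_eq_mul]
  have hmem : ∀ a : I, f a ∈ LinearMap.range (Algebra.linearMap R (FractionRing R)) := by
    rintro a
    obtain ⟨r, hr⟩ := hb a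
    exact ⟨r, by simpa [hfa] using hr⟩
  set e := LinearEquiv.ofInjective (Algebra.linearMap R (FractionRing R)) hinj
  refine ⟨e.symm.toLinearMap.comp
    (f.codRestrict (LinearMap.range (Algebra.linearMap R (FractionRing R))) hmem), fun a => ?_⟩
  have h2 : Algebra.linearMap R (FractionRing R) (e.symm ⟨f a, hmem a⟩) = f a := by
    have h3 := e.apply_symm_apply ⟨f a, hmem a⟩
    calc Algebra.linearMap R (FractionRing R) (e.symm ⟨f a, hmem a⟩)
        = ↑(e (e.symm ⟨f a, hmem a⟩)) := rfl
    _ = f a := by rw [h3]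
  exact h2.trans (hfa a)

theorem stmt17Aux.mem_mul_rep {R : Type u} {K : Type u} [CommRing R] [CommRing K] [Algebra R K]
    (P Q : Submodule R K) (x : K) (hx : x ∈ P * Q) :
    ∃ (n : ℕ) (a b : Fin n → K), (∀ i, a i ∈ P) ∧ (∀ i, b i ∈ Q) ∧ x = ∑ i, a i * b i := by
  refine Submodule.mul_induction_on hx ?_ ?_
  · intro m hm n hn
    exact ⟨1, fun _ => m, fun _ => n, fun _ => hm, fun _ => hn, by simp⟩
  · rintro x y ⟨n₁, a₁, b₁, ha₁, hb₁, rfl⟩ ⟨n₂, a₂, b₂, ha₂, hb₂, rfl⟩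
    refine ⟨n₁ + n₂, Fin.append a₁ a₂, Fin.append b₁ b₂, ?_, ?_, ?_⟩
    · intro i
      induction i using Fin.addCases with
      | left i => simpa using ha₁ i
      | right i => simpa using ha₂ i
    · intro i
      induction i using Fin.addCases with
      | left i => simpa using hb₁ i
      | right i => simpa using hb₂ i
    · rw [Fin.sum_univ_add]; simp

theorem stmt17Aux.key (R : Type u) [CommRing R] [IsDomain R] (M : Type u) [AddCommGroup M] [Module R M]
    (htf : ∀ (r : R) (m : M), r • m = 0 → r = 0 ∨ m = 0)
    (I : Ideal R)
    (hI : IsUnit (I : FractionalIdeal (nonZeroDivisors R) (FractionRing R))) :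
    Function.Injective (TensorProduct.lift ((LinearMap.lsmul R M).comp I.subtype)) := by
  classical
  set K := FractionRing R with hK
  have hinj : Function.Injective (algebraMap R K) := IsFractionRing.injective R K
  obtain ⟨u, hu⟩ := hI
  set J : FractionalIdeal (nonZeroDivisors R) K := ↑u⁻¹ with hJ
  have hIJ : (I : FractionalIdeal (nonZeroDivisors R) K) * J = 1 := by
    rw [← hu, hJ]; exact_mod_cast u.mul_inv
  have hone : (1 : K) ∈
      ((I : FractionalIdeal (nonZeroDivisors R) K) : Submodule R K) * (J : Submodule R K) := by
    rw [← FractionalIdeal.coe_mul, hIJ, FractionalIdeal.coe_one]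
    exact Submodule.mem_one.mpr ⟨1, map_one _⟩
  obtain ⟨n, α, β, hα, hβ, hsum⟩ := stmt17Aux.mem_mul_rep _ _ _ hone
  -- lift the α's to I
  have hα' : ∀ i, ∃ a ∈ I, algebraMap R K a = α i := by
    intro i
    exact (FractionalIdeal.mem_coeIdeal _).mp (hα i)
  choose a ha haeq using hα'
  -- products with elements of I are integral
  have hprod : ∀ i (x : I), ∃ r : R, algebraMap R K r = β i * algebraMap R K x := by
    intro i x
    have hx : algebraMap R K x ∈ ((I : FractionalIdeal (nonZeroDivisors R) K) : Submodule R K) :=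
      (FractionalIdeal.mem_coeIdeal _).mpr ⟨x, x.2, rfl⟩
    have hm : β i * algebraMap R K x ∈
        (J : Submodule R K) * ((I : FractionalIdeal (nonZeroDivisors R) K) : Submodule R K) :=
      Submodule.mul_mem_mul (hβ i) hx
    rw [mul_comm, ← FractionalIdeal.coe_mul, hIJ, FractionalIdeal.coe_one] at hm
    exact Submodule.mem_one.mp hm
  choose g hg using fun i => stmt17Aux.div_linear R I (β i) (hprod i)
  -- denominator of J
  obtain ⟨d, hd, hdint⟩ := J.isFractional
  have hd0 : d ≠ 0 := nonZeroDivisors.ne_zero hd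
  have hdβ : ∀ i, ∃ e : R, algebraMap R K e = d • β i := fun i => hdint (β i) (hβ i)
  choose e he using hdβ
  -- identity (1): ∑ i, g i x • a i = x
  have key1 : ∀ x : I, (∑ i, g i x • a i) = (x : R) := by
    intro x
    apply hinj
    rw [map_sum]
    have : ∀ i, algebraMap R K (g i x • a i) = algebraMap R K x * (α i * β i) := by
      intro i
      rw [smul_eq_mul, map_mul, hg i x, haeq i]; ring
    rw [Finset.sum_congr rfl fun i _ => this i, ← Finset.mul_sum, ← hsum, mul_one]
  -- identity (2): d * g i x = e i * x
  have key2 : ∀ i (x : I), d * g i x = e i * (x : R) := by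
    intro i x
    apply hinj
    rw [map_mul, map_mul, hg i x, he i, Algebra.smul_def]; ring
  -- the tensor maps
  set μ : I ⊗[R] M →ₗ[R] M := TensorProduct.lift ((LinearMap.lsmul R M).comp I.subtype) with hμ
  set f : Fin n → (I ⊗[R] M →ₗ[R] M) :=
    fun i => TensorProduct.lift ((LinearMap.lsmul R M).comp (g i)) with hfdef
  have claimA : (LinearMap.id : I ⊗[R] M →ₗ[R] I ⊗[R] M) =
      ∑ i, (TensorProduct.mk R I M ⟨a i, ha i⟩).comp (f i) := by
    apply TensorProduct.ext'
    intro x m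
    simp only [LinearMap.id_coe, id_eq, LinearMap.sum_apply, LinearMap.coe_comp,
      Function.comp_apply, hfdef, TensorProduct.lift.tmul, LinearMap.coe_comp,
      LinearMap.lsmul_apply, TensorProduct.mk_apply]
    have : ∀ i : Fin n, (⟨a i, ha i⟩ : I) ⊗ₜ[R] (g i x • m) = (g i x • ⟨a i, ha i⟩ : I) ⊗ₜ[R] m :=
      fun i => (TensorProduct.smul_tmul _ _ _).symm
    rw [Finset.sum_congr rfl fun i _ => this i, ← TensorProduct.sum_tmul]
    congr 1
    ext
    push_cast
    exact (key1 x).symm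
  have claimB : ∀ i, d • f i = e i • μ := by
    intro i
    apply TensorProduct.ext'
    intro x m
    simp only [LinearMap.smul_apply, hfdef, hμ, TensorProduct.lift.tmul, LinearMap.coe_comp,
      Function.comp_apply, LinearMap.lsmul_apply, Submodule.coe_subtype]
    rw [smul_smul, smul_smul, key2 i x]
  rw [injective_iff_map_eq_zero]
  intro z hz
  have hfz : ∀ i, f i z = 0 := by
    intro i
    have h1 : d • f i z = 0 := by
      have := congrArg (fun φ : I ⊗[R] M →ₗ[R] M => φ z) (claimB i)
      simpa [hz] using this
    rcases htf d (f i z) h1 with h | h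
    · exact absurd h hd0
    · exact h
  have := congrArg (fun φ : I ⊗[R] M →ₗ[R] I ⊗[R] M => φ z) claimA
  simpa [hfz] using this

/-- over a Prüfer domain (every finitely generated nonzero ideal is
invertible as a fractional ideal), a module is flat iff it is torsion-free. -/
theorem stmt17 (R : Type u) [CommRing R] [IsDomain R]
    (hpruf : ∀ I : Ideal R, I.FG → I ≠ ⊥ →
      IsUnit (I : FractionalIdeal (nonZeroDivisors R) (FractionRing R)))
    (M : Type u) [AddCommGroup M] [Module R M] :
    Module.Flat R M ↔ ∀ (r : R) (m : M), r • m = 0 → r = 0 ∨ m = 0 := by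
  constructor
  · intro hflat r m h
    by_cases hr : r = 0
    · exact Or.inl hr
    · right
      have hreg : IsSMulRegular R r := fun a b hab => by
        simpa using mul_left_cancel₀ hr (by simpa [mul_comm] using hab)
      have h2 : IsSMulRegular (TensorProduct R M R) r := hreg.lTensor M
      have h3 : IsSMulRegular M r :=
        h2.of_injective (TensorProduct.rid R M).symm.toLinearMap
          (TensorProduct.rid R M).symm.injective
      exact h3 (by simpa using h)
  · intro htf
    rw [Module.Flat.iff_lift_lsmul_comp_subtype_injective]
    intro I hfg
    by_cases hbot : I = ⊥
    · subst hbot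
      exact fun x y _ => Subsingleton.elim x y
    · exact stmt17Aux.key R M htf I (hpruf I hfg hbot)
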